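/- Let s, u ∈ ℂ with s ≠ 0, let A = [[s, 1], [0, s⁻¹]], B = [[s, 0], [−u, s⁻¹]] in SL₂(ℂ), W = B·A⁻¹·B⁻¹·A, and z = 2 + (2 − s² − s⁻²)u + u². Then for every integer n, W^n·A − B·W^n = [[0, φ], [u·φ, 0]], where φ = S_n(z) − (u² − (u+1)(s² + s⁻² − 3))·S_{n−1}(z). -/

import Mathlib

open Matrix

set_option maxHeartbeats 1600000 in
/-- Let `s, u ∈ ℂ` with `s ≠ 0`, let `A = !![s, 1; 0, s⁻¹]`, `B = !![s, 0; -u, s⁻¹]`,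
`W = B * A⁻¹ * B⁻¹ * A`, and `z = 2 + (2 - s² - s⁻²)u + u²`. Then for every integer `n`,
`W^n * A - B * W^n = !![0, φ; u * φ, 0]`, where
`φ = S n - (u² - (u+1)(s² + s⁻² - 3)) * S (n-1)` is the Riley polynomial of the twist
knot `J(2,2n)` evaluated at `(s, u)` (here `S` denotes the Chebyshev polynomials of the
second kind evaluated at `z`). -/
theorem riley_polynomial_twist_knot (s u z : ℂ) (hs : s ≠ 0)
    (hz : z = 2 + (2 - s ^ 2 - s⁻¹ ^ 2) * u + u ^ 2)
    (S : ℤ → ℂ) (hS0 : S 0 = 1) (hS1 : S 1 = z)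
    (hSrec : ∀ k : ℤ, S k = z * S (k - 1) - S (k - 2))
    (A B W : Matrix (Fin 2) (Fin 2) ℂ)
    (hA : A = !![s, 1; 0, s⁻¹]) (hB : B = !![s, 0; -u, s⁻¹])
    (hW : W = B * A⁻¹ * B⁻¹ * A) :
    ∀ n : ℤ, W ^ n * A - B * W ^ n =
      !![0, S n - (u ^ 2 - (u + 1) * (s ^ 2 + s⁻¹ ^ 2 - 3)) * S (n - 1);
         u * (S n - (u ^ 2 - (u + 1) * (s ^ 2 + s⁻¹ ^ 2 - 3)) * S (n - 1)), 0] := by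
  have hSm1 : S (-1) = 0 := by
    have h := hSrec 1
    rw [hS1] at h
    norm_num [hS0] at h
    linear_combination h
  have hSm2 : S (-2) = -1 := by
    have h := hSrec 0
    rw [hS0] at h
    norm_num [hSm1] at h
    linear_combination h
  have hAinv : A⁻¹ = !![s⁻¹, -1; 0, s] := by
    apply Matrix.inv_eq_right_inv
    rw [hA]
    ext i j
    fin_cases i <;> fin_cases j <;>
      simp [Matrix.mul_apply, Fin.sum_univ_succ] <;> field_simp
  have hBinv : B⁻¹ = !![s⁻¹, 0; u, s] := by
    apply Matrix.inv_eq_right_inv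
    rw [hB]
    ext i j
    fin_cases i <;> fin_cases j <;>
      simp [Matrix.mul_apply, Fin.sum_univ_succ] <;> field_simp <;> ring
  have hWm : W = !![1 - u * s ^ 2, s⁻¹ - s * (u + 1);
      u * s * (u + 1) - u * s⁻¹, (u + 1) ^ 2 - u * s⁻¹ ^ 2] := by
    rw [hW, hAinv, hBinv, hA, hB]
    ext i j
    fin_cases i <;> fin_cases j <;>
      simp [Matrix.mul_apply, Fin.sum_univ_succ] <;> (first | (field_simp; try ring1) | ring1)
  have hdet1 : W.det = 1 := by
    rw [hWm, Matrix.det_fin_two_of]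
    field_simp
    ring
  have hdet : IsUnit W.det := hdet1 ▸ isUnit_one
  have hW2 : W * W = z • W - 1 := by
    rw [hWm, hz]
    ext i j
    fin_cases i <;> fin_cases j <;>
      simp [Matrix.mul_apply, Fin.sum_univ_succ, Matrix.one_apply] <;>
      (first | (field_simp; try ring1) | ring1)
  have hWinv : W⁻¹ = z • (1 : Matrix (Fin 2) (Fin 2) ℂ) - W := by
    apply Matrix.inv_eq_right_inv
    have h : W * (z • (1 : Matrix (Fin 2) (Fin 2) ℂ) - W) = z • W - W * W := by
      rw [Matrix.mul_sub, Matrix.mul_smul, Matrix.mul_one]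
    rw [h, hW2]
    abel
  have aux1 : ∀ a b : ℂ, (a • W - b • (1 : Matrix (Fin 2) (Fin 2) ℂ)) * W
      = (z * a - b) • W - a • 1 := by
    intro a b
    simp only [sub_mul, smul_mul_assoc, one_mul, hW2]
    module
  have aux2 : ∀ a b : ℂ, (a • W - b • (1 : Matrix (Fin 2) (Fin 2) ℂ)) * (z • 1 - W)
      = b • W - (z * b - a) • 1 := by
    intro a b
    simp only [sub_mul, mul_sub, smul_mul_assoc, Matrix.mul_smul, mul_one, one_mul, hW2]
    module
  have key : ∀ n : ℤ, W ^ n = S (n - 1) • W - S (n - 2) • (1 : Matrix (Fin 2) (Fin 2) ℂ) := by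
    intro n
    induction n using Int.induction_on with
    | zero =>
      norm_num [hSm1, hSm2]
    | succ k ih =>
      rw [Matrix.zpow_add_one hdet, ih, aux1,
        show ((k : ℤ) + 1 - 1) = (k : ℤ) by ring,
        show ((k : ℤ) + 1 - 2) = (k : ℤ) - 1 by ring, hSrec k]
    | pred k ih =>
      rw [Matrix.zpow_sub_one hdet, ih, hWinv, aux2,
        show (-(k : ℤ) - 1 - 1) = -(k : ℤ) - 2 by ring,
        show (-(k : ℤ) - 1 - 2) = -(k : ℤ) - 3 by ring]
      have hk : S (-(k : ℤ) - 1) = z * S (-(k : ℤ) - 2) - S (-(k : ℤ) - 3) := by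
        have h := hSrec (-(k : ℤ) - 1)
        rw [show (-(k : ℤ) - 1 - 1) = -(k : ℤ) - 2 by ring,
          show (-(k : ℤ) - 1 - 2) = -(k : ℤ) - 3 by ring] at h
        exact h
      rw [hk]
      module
  have hMA : W * A - B * W = !![0, s ^ 2 + s⁻¹ ^ 2 - u - 1;
      u * (s ^ 2 + s⁻¹ ^ 2 - u - 1), 0] := by
    rw [hWm, hA, hB]
    ext i j
    fin_cases i <;> fin_cases j <;>
      simp [Matrix.mul_apply, Fin.sum_univ_succ] <;>
      (first | (field_simp; try ring1) | ring1)
  have hAB : A - B = !![0, 1; u, 0] := by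
    rw [hA, hB]
    ext i j
    fin_cases i <;> fin_cases j <;> simp
  intro n
  have expand : W ^ n * A - B * W ^ n
      = S (n - 1) • (W * A - B * W) - S (n - 2) • (A - B) := by
    rw [key n]
    simp only [sub_mul, mul_sub, smul_mul_assoc, Matrix.mul_smul, one_mul, mul_one]
    module
  rw [expand, hMA, hAB, hSrec n, hz]
  ext i j
  fin_cases i <;> fin_cases j <;>
    simp <;> ring1
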